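/- arXiv:2405.16252 — 7 statements merged into one kernel-verified Lean document; each statement's English description precedes it below -/
import Mathlib

section
/- Let τ, ν ∈ ℤ and let g, s : ℤ → ℤ be sequences such that: (i) g(n+1) = g(n) − 1 for every n < 2τ and g(n+1) = g(n) + 1 for every n ≥ 2τ; (ii) either (V) there is C ∈ ℤ with s(n) = C + |n − ν| for all n and ν ∈ {2τ − 1, 2τ + 1}, or (W) ν = τ = 0 and there is C ∈ ℤ with s(n) = C + |n| for all n ≠ 0 and s(0) = C + 2; (iii) g(n) ≥ s(n) for every n ≠ 0; (iv) g(1) ≥ s(1) + 2. If there exists an integer n₀ > 0 with g(n₀) = s(n₀), then alternative (V) holds, ν = 2τ − 1, 0 < ν < n₀, and moreover g(m) = s(m) for every m ≥ 2τ while g(m) = s(m) + 2 for every m ≤ 2τ − 1. -/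
/-- Let `τ ν : ℤ` and `g s : ℤ → ℤ` such that: (i) `g` is unimodal with
slopes `∓1` and vertex `2τ`; (ii) either (V) `s n = C + |n - ν|` for some `C` with
`ν ∈ {2τ - 1, 2τ + 1}`, or (W) `ν = τ = 0` and `s n = C + |n|` for `n ≠ 0` while
`s 0 = C + 2`; (iii) `g n ≥ s n` for every `n ≠ 0`; (iv) `g 1 ≥ s 1 + 2`.  If there is an
integer `n₀ > 0` with `g n₀ = s n₀`, then alternative (V) holds, `ν = 2τ - 1`,
`0 < ν < n₀`, and moreover `g m = s m` for every `m ≥ 2τ` while `g m = s m + 2` for every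
`m ≤ 2τ - 1`. -/
theorem stmt3 (τ ν : ℤ) (g s : ℤ → ℤ)
    (hg₁ : ∀ n : ℤ, n < 2 * τ → g (n + 1) = g n - 1)
    (hg₂ : ∀ n : ℤ, 2 * τ ≤ n → g (n + 1) = g n + 1)
    (hVW :
      (∃ C : ℤ, (∀ n : ℤ, s n = C + |n - ν|) ∧ (ν = 2 * τ - 1 ∨ ν = 2 * τ + 1)) ∨
      (ν = 0 ∧ τ = 0 ∧ ∃ C : ℤ, (∀ n : ℤ, n ≠ 0 → s n = C + |n|) ∧ s 0 = C + 2))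
    (hge : ∀ n : ℤ, n ≠ 0 → s n ≤ g n)
    (h1 : s 1 + 2 ≤ g 1)
    (n₀ : ℤ) (hn₀pos : 0 < n₀) (hn₀ : g n₀ = s n₀) :
    (∃ C : ℤ, ∀ n : ℤ, s n = C + |n - ν|) ∧
    ν = 2 * τ - 1 ∧ 0 < ν ∧ ν < n₀ ∧
    (∀ m : ℤ, 2 * τ ≤ m → g m = s m) ∧
    (∀ m : ℤ, m ≤ 2 * τ - 1 → g m = s m + 2) := by
  have gupNat : ∀ k : ℕ, g (2 * τ + k) = g (2 * τ) + k := by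
    intro k
    induction k with
    | zero => simp
    | succ k ih =>
      have h := hg₂ (2 * τ + k) (by linarith [Int.natCast_nonneg k])
      have h2 : 2 * τ + ((k : ℤ) + 1) = 2 * τ + k + 1 := by ring
      push_cast
      rw [h2]
      push_cast at ih
      linarith [h, ih]
  have gup : ∀ n : ℤ, 2 * τ ≤ n → g n = g (2 * τ) + (n - 2 * τ) := by
    intro n hn
    have hk : ((n - 2 * τ).toNat : ℤ) = n - 2 * τ := Int.toNat_of_nonneg (by linarith)
    have hgu := gupNat (n - 2 * τ).toNat
    rw [hk] at hgu
    have h2 : 2 * τ + (n - 2 * τ) = n := by ring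
    rw [h2] at hgu
    exact hgu
  have gdownNat : ∀ k : ℕ, g (2 * τ - k) = g (2 * τ) + k := by
    intro k
    induction k with
    | zero => simp
    | succ k ih =>
      have h := hg₁ (2 * τ - ((k : ℤ) + 1)) (by linarith [Int.natCast_nonneg k])
      have h2 : (2 * τ - ((k : ℤ) + 1)) + 1 = 2 * τ - k := by ring
      rw [h2] at h
      push_cast
      push_cast at ih
      linarith
  have gabs : ∀ n : ℤ, g n = g (2 * τ) + |n - 2 * τ| := by
    intro n
    rcases le_or_gt (2 * τ) n with h | h
    · rw [gup n h, abs_of_nonneg (by linarith)]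
    · have hk : ((2 * τ - n).toNat : ℤ) = 2 * τ - n := Int.toNat_of_nonneg (by linarith)
      have hgd := gdownNat (2 * τ - n).toNat
      rw [hk] at hgd
      have hn : 2 * τ - (2 * τ - n) = n := by ring
      rw [hn] at hgd
      rw [hgd, abs_of_nonpos (by linarith)]
      ring
  have e1 : g 1 = g (2 * τ) + |1 - 2 * τ| := gabs 1
  have en : g n₀ = g (2 * τ) + |n₀ - 2 * τ| := gabs n₀
  rcases hVW with ⟨C, hs, hν⟩ | ⟨hν0, hτ0, C, hs, hs0⟩
  · rw [hs 1] at h1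
    rw [hs n₀] at hn₀
    have key : ν = 2 * τ - 1 ∧ 0 < ν ∧ ν < n₀ ∧ g (2 * τ) = C + 1 := by
      rcases hν with h | h <;> subst h <;>
        simp only [Int.abs_eq_natAbs] at e1 en h1 hn₀ <;> omega
    obtain ⟨hν', hνpos, hνlt, hG⟩ := key
    refine ⟨⟨C, hs⟩, hν', hνpos, hνlt, ?_, ?_⟩
    · intro m hm
      have em := gabs m
      rw [hs m]
      simp only [Int.abs_eq_natAbs] at em ⊢
      omega
    · intro m hm
      have em := gabs m
      rw [hs m]
      simp only [Int.abs_eq_natAbs] at em ⊢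
      omega
  · exfalso
    subst hν0; subst hτ0
    rw [hs 1 one_ne_zero] at h1
    rw [hs n₀ (by omega)] at hn₀
    simp only [Int.abs_eq_natAbs] at e1 en h1 hn₀
    omega
end

section
/- Under hypotheses (P1)–(P10) of the given setting: a(ν₊ − 1) = a(ν₊) + 1 and a(ν₋ + 1) = a(ν₋) + 1; consequently ν₊ ≠ ν₋ + 1, so either ν₊ = ν₋ or ν₊ ≥ ν₋ + 2. -/
/-- Under hypotheses (P1)–(P10) on the sequences `a b : ℤ → ℕ`, with
`ν₊` the least element of `{n | a (k+1) = a k + 1 for all k ≥ n}` and `ν₋` the greatest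
element of `{n | a (k-1) = a k + 1 for all k ≤ n}`: one has `a (ν₊ - 1) = a ν₊ + 1` and
`a (ν₋ + 1) = a ν₋ + 1`; consequently `ν₊ ≠ ν₋ + 1`, so either `ν₊ = ν₋` or
`ν₊ ≥ ν₋ + 2`. -/
theorem stmt5 (a b : ℤ → ℕ)
    (P1 : ∀ n : ℤ, Odd n → a n = b n)
    (P2 : ∀ n : ℤ, Even n → (b n : ℤ) - a n ∈ ({-2, 0, 2} : Set ℤ))
    (P3 : ∀ n : ℤ, Even n → b n ≠ a n → a (n - 1) = a (n + 1))
    (P4 : ∀ n : ℤ, |(a (n + 1) : ℤ) - b n| ≤ 1 ∧ |(b (n + 1) : ℤ) - a n| ≤ 1)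
    (P5 : ∀ n : ℤ, Odd n → a n = b (n + 1) + 1 → a (n - 1) = a n + 1)
    (P6 : ∀ n : ℤ, Odd n → a n = a (n + 1) + 1 → b (n - 1) = a n + 1)
    (P7 : ∀ n : ℤ, Even n → b n = a (n + 1) + 1 → a (n - 1) = a n + 1)
    (P8 : ∀ n : ℤ, Even n → a n = a (n + 1) + 1 → a (n - 1) = b n + 1)
    (P9 : ∃ Np Nm : ℤ, (∀ n : ℤ, Np ≤ n → a (n + 1) = a n + 1) ∧
        (∀ n : ℤ, n ≤ Nm → a (n - 1) = a n + 1))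
    (P10 : ∀ n : ℤ, (a n : ℤ) ≡ n [ZMOD 2] ∧ (b n : ℤ) ≡ n [ZMOD 2])
    (νp νm : ℤ)
    (hνp : IsLeast {n : ℤ | ∀ k : ℤ, n ≤ k → a (k + 1) = a k + 1} νp)
    (hνm : IsGreatest {n : ℤ | ∀ k : ℤ, k ≤ n → a (k - 1) = a k + 1} νm) :
    a (νp - 1) = a νp + 1 ∧ a (νm + 1) = a νm + 1 ∧
    νp ≠ νm + 1 ∧ (νp = νm ∨ νm + 2 ≤ νp) := by

  obtain ⟨hp_mem, hp_min⟩ := hνp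
  obtain ⟨hm_mem, hm_max⟩ := hνm
  have step : ∀ m : ℤ, a (m + 1) = a m + 1 ∨ a m = a (m + 1) + 1 := by
    intro m
    have habs : |(a (m + 1) : ℤ) - a m| ≤ 1 := by
      rcases Int.even_or_odd m with he | ho
      · have hb : a (m + 1) = b (m + 1) := P1 (m + 1) (Even.add_one he)
        have h := (P4 m).2
        rw [hb]; exact h
      · have hb : a m = b m := P1 m ho
        have h := (P4 m).1
        rw [hb]; exact h
    have h1 : (a (m + 1) : ℤ) % 2 = (m + 1) % 2 := (P10 (m + 1)).1
    have h2 : (a m : ℤ) % 2 = m % 2 := (P10 m).1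
    rw [abs_le] at habs
    omega
  -- a (νp - 1) = a νp + 1
  have hfailp : ¬ a (νp - 1 + 1) = a (νp - 1) + 1 := by
    intro h
    have hmem : νp - 1 ∈ {n : ℤ | ∀ k : ℤ, n ≤ k → a (k + 1) = a k + 1} := by
      intro k hk
      rcases eq_or_lt_of_le hk with rfl | h'
      · exact h
      · exact hp_mem k (by omega)
    have := hp_min hmem
    omega
  have e1 : νp - 1 + 1 = νp := by ring
  have key1 : a (νp - 1) = a νp + 1 := by
    rcases step (νp - 1) with h | h
    · rw [e1] at h; exact absurd (by rw [e1]; exact h) hfailp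
    · rw [e1] at h; exact h
  -- a (νm + 1) = a νm + 1
  have hfailm : ¬ a (νm + 1 - 1) = a (νm + 1) + 1 := by
    intro h
    have hmem : νm + 1 ∈ {n : ℤ | ∀ k : ℤ, k ≤ n → a (k - 1) = a k + 1} := by
      intro k hk
      rcases eq_or_lt_of_le hk with rfl | h'
      · exact h
      · exact hm_mem k (by omega)
    have := hm_max hmem
    omega
  have e2 : νm + 1 - 1 = νm := by ring
  have key2 : a (νm + 1) = a νm + 1 := by
    rcases step νm with h | h
    · exact h
    · exact absurd (by rw [e2]; exact h) hfailm
  -- νp ≠ νm + 1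
  have hne : νp ≠ νm + 1 := by
    intro h
    rw [h] at key1
    have : νm + 1 - 1 = νm := by ring
    rw [this] at key1
    omega
  -- νm ≤ νp
  have hle : νm ≤ νp := by
    by_contra hlt
    push_neg at hlt
    have h1 := hp_mem νp le_rfl
    have h2 := hm_mem (νp + 1) (by omega)
    have : νp + 1 - 1 = νp := by ring
    rw [this] at h2
    omega
  exact ⟨key1, key2, hne, by omega⟩
end

section
/- Under hypotheses (P1)–(P10) of the given setting, suppose ν₊ = ν₋ and write m = ν₊. Then the sequence a is V-shaped with vertex m, i.e. a(n) = a(m) + |n − m| for every n; b(n) = a(n) for every n ≠ m; if m is odd then also b(m) = a(m), while if m is even then b(m) ∈ {a(m), a(m) + 2}. -/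
/-- Under hypotheses (P1)–(P10) on `a b : ℤ → ℕ`, suppose `ν₊ = ν₋` and
write `m = ν₊`.  Then `a` is V-shaped with vertex `m`, i.e. `a n = a m + |n - m|` for
every `n`; `b n = a n` for every `n ≠ m`; if `m` is odd then also `b m = a m`, while if
`m` is even then `b m ∈ {a m, a m + 2}`. -/
theorem stmt6 (a b : ℤ → ℕ)
    (P1 : ∀ n : ℤ, Odd n → a n = b n)
    (P2 : ∀ n : ℤ, Even n → (b n : ℤ) - a n ∈ ({-2, 0, 2} : Set ℤ))
    (P3 : ∀ n : ℤ, Even n → b n ≠ a n → a (n - 1) = a (n + 1))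
    (P4 : ∀ n : ℤ, |(a (n + 1) : ℤ) - b n| ≤ 1 ∧ |(b (n + 1) : ℤ) - a n| ≤ 1)
    (P5 : ∀ n : ℤ, Odd n → a n = b (n + 1) + 1 → a (n - 1) = a n + 1)
    (P6 : ∀ n : ℤ, Odd n → a n = a (n + 1) + 1 → b (n - 1) = a n + 1)
    (P7 : ∀ n : ℤ, Even n → b n = a (n + 1) + 1 → a (n - 1) = a n + 1)
    (P8 : ∀ n : ℤ, Even n → a n = a (n + 1) + 1 → a (n - 1) = b n + 1)
    (P9 : ∃ Np Nm : ℤ, (∀ n : ℤ, Np ≤ n → a (n + 1) = a n + 1) ∧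
        (∀ n : ℤ, n ≤ Nm → a (n - 1) = a n + 1))
    (P10 : ∀ n : ℤ, (a n : ℤ) ≡ n [ZMOD 2] ∧ (b n : ℤ) ≡ n [ZMOD 2])
    (νp νm : ℤ)
    (hνp : IsLeast {n : ℤ | ∀ k : ℤ, n ≤ k → a (k + 1) = a k + 1} νp)
    (hνm : IsGreatest {n : ℤ | ∀ k : ℤ, k ≤ n → a (k - 1) = a k + 1} νm)
    (heq : νp = νm) :
    (∀ n : ℤ, a n = a νp + (n - νp).natAbs) ∧
    (∀ n : ℤ, n ≠ νp → b n = a n) ∧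
    (Odd νp → b νp = a νp) ∧
    (Even νp → b νp = a νp ∨ b νp = a νp + 2) := by
  obtain ⟨hpd, -⟩ := hνp
  obtain ⟨hmd, -⟩ := hνm
  subst heq
  simp only [Set.mem_setOf_eq] at hpd hmd
  have up : ∀ d : ℕ, a (νp + d) = a νp + d := by
    intro d
    induction d with
    | zero => simp
    | succ d ih =>
      have h1 := hpd (νp + d) (by omega)
      have h2 : νp + ((d + 1 : ℕ) : ℤ) = νp + (d : ℤ) + 1 := by push_cast; ring
      rw [h2, h1, ih]; omega
  have down : ∀ d : ℕ, a (νp - d) = a νp + d := by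
    intro d
    induction d with
    | zero => simp
    | succ d ih =>
      have h1 := hmd (νp - d) (by omega)
      have h2 : νp - ((d + 1 : ℕ) : ℤ) = νp - (d : ℤ) - 1 := by push_cast; ring
      rw [h2, h1, ih]; omega
  have hV : ∀ n : ℤ, a n = a νp + (n - νp).natAbs := by
    intro n
    rcases le_or_gt νp n with h | h
    · have := up (n - νp).natAbs
      rwa [show νp + ((n - νp).natAbs : ℤ) = n by omega] at this
    · have := down (n - νp).natAbs
      rwa [show νp - ((n - νp).natAbs : ℤ) = n by omega] at this
  refine ⟨hV, ?_, fun h => (P1 νp h).symm, ?_⟩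
  · intro n hn
    rcases Int.even_or_odd n with he | ho
    · by_contra hne
      have h3 := P3 n he hne
      have h1 := hV (n - 1)
      have h2 := hV (n + 1)
      omega
    · exact (P1 n ho).symm
  · intro he
    have h2 := P2 νp he
    simp only [Set.mem_insert_iff, Set.mem_singleton_iff] at h2
    have h4 := (P4 νp).1
    have h1 := hV (νp + 1)
    rw [abs_le] at h4
    omega
end

section
/- Under hypotheses (P1)–(P10) of the given setting, suppose ν₊ = ν₋ + 2 and write m = ν₋ + 1. Then a(ν₋) = a(ν₊), a(m) = a(ν₊) + 1, a(n) = a(ν₊) + (n − ν₊) for every n ≥ ν₊, and a(n) = a(ν₋) + (ν₋ − n) for every n ≤ ν₋ (so a is W-shaped). Moreover: if m is even then b(m) = a(m) − 2 and b(n) = a(n) for every n ≠ m; if m is odd then b(m − 1) = a(m − 1) + 2, b(m + 1) = a(m + 1) + 2, and b(n) = a(n) for every n ∉ {m − 1, m + 1}. -/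
/-- Under hypotheses (P1)–(P10) on `a b : ℤ → ℕ`, suppose
`ν₊ = ν₋ + 2` and write `m = ν₋ + 1`.  Then `a ν₋ = a ν₊`, `a m = a ν₊ + 1`,
`a n = a ν₊ + (n - ν₊)` for `n ≥ ν₊`, and `a n = a ν₋ + (ν₋ - n)` for `n ≤ ν₋`
(so `a` is W-shaped).  Moreover: if `m` is even then `b m = a m - 2` and `b n = a n` for
every `n ≠ m`; if `m` is odd then `b (m-1) = a (m-1) + 2`, `b (m+1) = a (m+1) + 2`, and
`b n = a n` for every `n ∉ {m - 1, m + 1}`. -/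
theorem stmt7 (a b : ℤ → ℕ)
    (P1 : ∀ n : ℤ, Odd n → a n = b n)
    (P2 : ∀ n : ℤ, Even n → (b n : ℤ) - a n ∈ ({-2, 0, 2} : Set ℤ))
    (P3 : ∀ n : ℤ, Even n → b n ≠ a n → a (n - 1) = a (n + 1))
    (P4 : ∀ n : ℤ, |(a (n + 1) : ℤ) - b n| ≤ 1 ∧ |(b (n + 1) : ℤ) - a n| ≤ 1)
    (P5 : ∀ n : ℤ, Odd n → a n = b (n + 1) + 1 → a (n - 1) = a n + 1)
    (P6 : ∀ n : ℤ, Odd n → a n = a (n + 1) + 1 → b (n - 1) = a n + 1)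
    (P7 : ∀ n : ℤ, Even n → b n = a (n + 1) + 1 → a (n - 1) = a n + 1)
    (P8 : ∀ n : ℤ, Even n → a n = a (n + 1) + 1 → a (n - 1) = b n + 1)
    (P9 : ∃ Np Nm : ℤ, (∀ n : ℤ, Np ≤ n → a (n + 1) = a n + 1) ∧
        (∀ n : ℤ, n ≤ Nm → a (n - 1) = a n + 1))
    (P10 : ∀ n : ℤ, (a n : ℤ) ≡ n [ZMOD 2] ∧ (b n : ℤ) ≡ n [ZMOD 2])
    (νp νm : ℤ)
    (hνp : IsLeast {n : ℤ | ∀ k : ℤ, n ≤ k → a (k + 1) = a k + 1} νp)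
    (hνm : IsGreatest {n : ℤ | ∀ k : ℤ, k ≤ n → a (k - 1) = a k + 1} νm)
    (heq : νp = νm + 2) :
    a νm = a νp ∧
    a (νm + 1) = a νp + 1 ∧
    (∀ n : ℤ, νp ≤ n → a n = a νp + (n - νp).natAbs) ∧
    (∀ n : ℤ, n ≤ νm → a n = a νm + (νm - n).natAbs) ∧
    (Even (νm + 1) →
      b (νm + 1) + 2 = a (νm + 1) ∧ ∀ n : ℤ, n ≠ νm + 1 → b n = a n) ∧
    (Odd (νm + 1) →
      b νm = a νm + 2 ∧ b (νm + 2) = a (νm + 2) + 2 ∧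
      ∀ n : ℤ, n ≠ νm → n ≠ νm + 2 → b n = a n) := by
  subst heq
  obtain ⟨hp, hpmin⟩ := hνp
  obtain ⟨hm, hmmax⟩ := hνm
  simp only [Set.mem_setOf_eq] at hp hm
  -- F1 / F2
  have F1 : ∀ k : ℤ, νm + 2 ≤ k → a (k + 1) = a k + 1 := hp
  have F2 : ∀ k : ℤ, k ≤ νm → a (k - 1) = a k + 1 := hm
  -- minimality at νm+1
  have F3 : a (νm + 2) ≠ a (νm + 1) + 1 := by
    intro h
    have hmem : (νm + 1) ∈ {n : ℤ | ∀ k : ℤ, n ≤ k → a (k + 1) = a k + 1} := by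
      intro k hk
      rcases eq_or_lt_of_le hk with rfl | hk'
      · rw [show νm + 1 + 1 = νm + 2 by ring]; exact h
      · exact F1 k (by omega)
    have := hpmin hmem
    omega
  -- maximality at νm+1
  have F4 : a νm ≠ a (νm + 1) + 1 := by
    intro h
    have hmem : (νm + 1) ∈ {n : ℤ | ∀ k : ℤ, k ≤ n → a (k - 1) = a k + 1} := by
      intro k hk
      rcases eq_or_lt_of_le hk with rfl | hk'
      · rw [show νm + 1 - 1 = νm by ring]; exact h
      · exact F2 k (by omega)
    have := hmmax hmem
    omega
  -- parity facts for omega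
  have par : ∀ n : ℤ, (a n : ℤ) % 2 = n % 2 ∧ (b n : ℤ) % 2 = n % 2 := by
    intro n
    obtain ⟨h1, h2⟩ := P10 n
    unfold Int.ModEq at h1 h2
    constructor <;> omega
  -- key1 : a (νm+1) = a νm + 1
  have key1 : a (νm + 1) = a νm + 1 := by
    have hd : |(a (νm + 1) : ℤ) - a νm| ≤ 1 := by
      rcases Int.even_or_odd νm with he | ho
      · -- νm even, νm+1 odd : use P4.2 at νm with P1 at νm+1
        have hb := P1 (νm + 1) (by exact he.add_one)
        have h4 := (P4 νm).2
        rw [← hb] at h4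
        exact h4
      · -- νm odd : b νm = a νm, use P4.1 at νm
        have hb := P1 νm ho
        have h4 := (P4 νm).1
        rw [← hb] at h4
        exact h4
    rw [abs_le] at hd
    have p1 := (par (νm + 1)).1
    have p2 := (par νm).1
    omega
  -- key2 : a (νm+1) = a (νm+2) + 1
  have key2 : a (νm + 1) = a (νm + 2) + 1 := by
    have hd : |(a (νm + 2) : ℤ) - a (νm + 1)| ≤ 1 := by
      rcases Int.even_or_odd νm with he | ho
      · -- νm even so νm+1 odd : b (νm+1) = a (νm+1), use P4.1 at νm+1
        have hb := P1 (νm + 1) he.add_one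
        have h4 := (P4 (νm + 1)).1
        rw [← hb, show νm + 1 + 1 = νm + 2 by ring] at h4
        exact h4
      · -- νm odd so νm+2 odd : b (νm+2) = a (νm+2), use P4.2 at νm+1
        have hb := P1 (νm + 2) (by
          obtain ⟨k, hk⟩ := ho; exact ⟨k + 1, by omega⟩)
        have h4 := (P4 (νm + 1)).2
        rw [show νm + 1 + 1 = νm + 2 by ring, ← hb] at h4
        exact h4
    rw [abs_le] at hd
    have p1 := (par (νm + 1)).1
    have p2 := (par (νm + 2)).1
    omega
  -- ramps
  have Rplus : ∀ n : ℤ, νm + 2 ≤ n → a n = a (νm + 2) + (n - (νm + 2)).natAbs := by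
    intro n hn
    refine Int.le_induction (motive := fun n _ => a n = a (νm + 2) + (n - (νm + 2)).natAbs) ?_ ?_ n hn
    · simp
    · intro k hk ih
      have := F1 k hk
      have h1 : (k + 1 - (νm + 2)).natAbs = (k - (νm + 2)).natAbs + 1 := by omega
      omega
  have Rminus : ∀ n : ℤ, n ≤ νm → a n = a νm + (νm - n).natAbs := by
    intro n hn
    refine Int.le_induction_down (motive := fun n _ => a n = a νm + (νm - n).natAbs) ?_ ?_ n hn
    · simp
    · intro k hk ih
      have := F2 k hk
      have h1 : (νm - (k - 1)).natAbs = (νm - k).natAbs + 1 := by omega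
      omega
  refine ⟨by omega, key2, Rplus, Rminus, ?_, ?_⟩
  · -- m = νm+1 even
    intro hev
    have hev' : (νm + 1) % 2 = 0 := Int.even_iff.mp hev
    constructor
    · -- use P8 at νm+1
      have h8 := P8 (νm + 1) hev (by
        rw [show νm + 1 + 1 = νm + 2 by ring]; exact key2)
      rw [show νm + 1 - 1 = νm by ring] at h8
      omega
    · intro n hn
      rcases Int.even_or_odd n with hne | hno
      swap
      · exact (P1 n hno).symm
      by_contra hc
      have h3 := P3 n hne hc
      have hne' : n % 2 = 0 := Int.even_iff.mp hne
      rcases lt_or_gt_of_ne hn with hlt | hgt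
      · -- n ≤ νm - 1, and n+1 ≤ νm
        have h2a := F2 n (by omega)
        have h2b := F2 (n + 1) (by omega)
        rw [show n + 1 - 1 = n by ring] at h2b
        omega
      · -- n ≥ νm + 3
        have h1a := F1 n (by omega)
        have h1b := F1 (n - 1) (by omega)
        rw [show n - 1 + 1 = n by ring] at h1b
        omega
  · -- m = νm+1 odd
    intro hod
    have hod' : (νm + 1) % 2 = 1 := Int.odd_iff.mp hod
    have hb1 : b νm = a νm + 2 := by
      have h6 := P6 (νm + 1) hod (by
        rw [show νm + 1 + 1 = νm + 2 by ring]; exact key2)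
      rw [show νm + 1 - 1 = νm by ring] at h6
      omega
    refine ⟨hb1, ?_, ?_⟩
    · -- b (νm+2) = a (νm+2) + 2
      have hne : a (νm + 1) ≠ b (νm + 2) + 1 := by
        intro h
        have h5 := P5 (νm + 1) hod (by
          rw [show νm + 1 + 1 = νm + 2 by ring]; exact h)
        rw [show νm + 1 - 1 = νm by ring] at h5
        omega
      have h2 := P2 (νm + 2) (by
        rcases Int.even_or_odd (νm + 2) with he | ho
        · exact he
        · exfalso; have := Int.odd_iff.mp ho; omega)
      simp only [Set.mem_insert_iff, Set.mem_singleton_iff] at h2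
      have h4 := (P4 (νm + 1)).2
      rw [show νm + 1 + 1 = νm + 2 by ring] at h4
      rw [abs_le] at h4
      omega
    · intro n hn1 hn2
      rcases Int.even_or_odd n with hne | hno
      swap
      · exact (P1 n hno).symm
      by_contra hc
      have h3 := P3 n hne hc
      have hne' : n % 2 = 0 := Int.even_iff.mp hne
      rcases lt_or_gt_of_ne hn1 with hlt | hgt
      · have h2a := F2 n (by omega)
        have h2b := F2 (n + 1) (by omega)
        rw [show n + 1 - 1 = n by ring] at h2b
        omega
      · have h1a := F1 n (by omega)
        have h1b := F1 (n - 1) (by omega)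
        rw [show n - 1 + 1 = n by ring] at h1b
        omega
end

section
/- Under hypotheses (P1)–(P10) of the given setting, suppose ν₊ > ν₋ + 2. Then for every even integer n with ν₋ ≤ n ≤ ν₊ one has a(n) = b(n) + 2 if ν₊ is odd and b(n) = a(n) + 2 if ν₊ is even, while a(n) = b(n) for every other integer n. Moreover a(n + 2) = a(n) for every n with ν₋ ≤ n ≤ ν₊ − 2, and a(ν₋ + 1) = a(ν₋) + 1 = a(ν₊) + 1 = a(ν₊ − 1) (so a is generalized W-shaped). -/
/-- Under hypotheses (P1)–(P10) on `a b : ℤ → ℕ`, suppose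
`ν₊ > ν₋ + 2`.  Then for every even integer `n` with `ν₋ ≤ n ≤ ν₊` one has
`a n = b n + 2` if `ν₊` is odd and `b n = a n + 2` if `ν₊` is even, while `a n = b n`
for every other integer `n`.  Moreover `a (n + 2) = a n` for every `n` with
`ν₋ ≤ n ≤ ν₊ - 2`, and `a (ν₋ + 1) = a ν₋ + 1 = a ν₊ + 1 = a (ν₊ - 1)` (so `a` is
generalized W-shaped). -/
theorem stmt8 (a b : ℤ → ℕ)
    (P1 : ∀ n : ℤ, Odd n → a n = b n)
    (P2 : ∀ n : ℤ, Even n → (b n : ℤ) - a n ∈ ({-2, 0, 2} : Set ℤ))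
    (P3 : ∀ n : ℤ, Even n → b n ≠ a n → a (n - 1) = a (n + 1))
    (P4 : ∀ n : ℤ, |(a (n + 1) : ℤ) - b n| ≤ 1 ∧ |(b (n + 1) : ℤ) - a n| ≤ 1)
    (P5 : ∀ n : ℤ, Odd n → a n = b (n + 1) + 1 → a (n - 1) = a n + 1)
    (P6 : ∀ n : ℤ, Odd n → a n = a (n + 1) + 1 → b (n - 1) = a n + 1)
    (P7 : ∀ n : ℤ, Even n → b n = a (n + 1) + 1 → a (n - 1) = a n + 1)
    (P8 : ∀ n : ℤ, Even n → a n = a (n + 1) + 1 → a (n - 1) = b n + 1)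
    (P9 : ∃ Np Nm : ℤ, (∀ n : ℤ, Np ≤ n → a (n + 1) = a n + 1) ∧
        (∀ n : ℤ, n ≤ Nm → a (n - 1) = a n + 1))
    (P10 : ∀ n : ℤ, (a n : ℤ) ≡ n [ZMOD 2] ∧ (b n : ℤ) ≡ n [ZMOD 2])
    (νp νm : ℤ)
    (hνp : IsLeast {n : ℤ | ∀ k : ℤ, n ≤ k → a (k + 1) = a k + 1} νp)
    (hνm : IsGreatest {n : ℤ | ∀ k : ℤ, k ≤ n → a (k - 1) = a k + 1} νm)
    (hgt : νm + 2 < νp) :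
    (∀ n : ℤ, Even n → νm ≤ n → n ≤ νp →
      (Odd νp → a n = b n + 2) ∧ (Even νp → b n = a n + 2)) ∧
    (∀ n : ℤ, ¬ (Even n ∧ νm ≤ n ∧ n ≤ νp) → a n = b n) ∧
    (∀ n : ℤ, νm ≤ n → n ≤ νp - 2 → a (n + 2) = a n) ∧
    a (νm + 1) = a νm + 1 ∧ a νm = a νp ∧ a (νp - 1) = a νp + 1 := by
  have hm1 : ∀ k : ℤ, k ≤ νm → a (k - 1) = a k + 1 := hνm.1
  have hp1 : ∀ k : ℤ, νp ≤ k → a (k + 1) = a k + 1 := hνp.1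
  have pa : ∀ n : ℤ, (a n : ℤ) % 2 = n % 2 := fun n => (P10 n).1
  have pb : ∀ n : ℤ, (b n : ℤ) % 2 = n % 2 := fun n => (P10 n).2
  have step : ∀ n : ℤ, a (n + 1) = a n + 1 ∨ a n = a (n + 1) + 1 := by
    intro n
    rcases Int.even_or_odd n with he | ho
    · have h1 := abs_le.mp (P4 n).2
      have h2 : a (n + 1) = b (n + 1) := P1 (n + 1) he.add_one
      have := pa n; have := pa (n + 1); have := pb (n + 1)
      omega
    · have h1 := abs_le.mp (P4 n).1
      have h2 : a n = b n := P1 n ho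
      have := pa n; have := pa (n + 1); have := pb n
      omega
  have L : ∀ m : ℤ, a m = a (m + 1) + 1 → a (m - 2) = a (m - 1) + 1 := by
    intro m hm
    rcases Int.even_or_odd m with he | ho
    · have h8 := P8 m he hm
      have h5 := P5 (m - 1) (he.sub_odd odd_one)
      rw [show m - 1 + 1 = m from by ring] at h5
      have h := h5 h8
      rwa [show m - 1 - 1 = m - 2 from by ring] at h
    · have h6 := P6 m ho hm
      have h7 := P7 (m - 1) (ho.sub_odd odd_one)
      rw [show m - 1 + 1 = m from by ring] at h7
      have h := h7 h6
      rwa [show m - 1 - 1 = m - 2 from by ring] at h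
  have up1 : ∀ m : ℤ, a (m + 1) = a m + 1 → a (m + 2 + 1) = a (m + 2) + 1 := by
    intro m hm
    rcases step (m + 2) with h | h
    · exact h
    · have h' := L (m + 2) h
      rw [show m + 2 - 2 = m from by ring, show m + 2 - 1 = m + 1 from by ring] at h'
      omega
  have upk : ∀ (k : ℕ) (m : ℤ), a (m + 1) = a m + 1 →
      a (m + 2 * (k : ℤ) + 1) = a (m + 2 * (k : ℤ)) + 1 := by
    intro k
    induction k with
    | zero => intro m hm; simpa using hm
    | succ k ih =>
      intro m hm
      have h1 := up1 (m + 2 * (k : ℤ)) (ih m hm)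
      rw [show (m + 2 * (((k : ℕ) + 1 : ℕ) : ℤ) + 1) = m + 2 * (k : ℤ) + 2 + 1 from by
            push_cast; ring,
          show (m + 2 * (((k : ℕ) + 1 : ℕ) : ℤ)) = m + 2 * (k : ℤ) + 2 from by
            push_cast; ring]
      exact h1
  have downk : ∀ (k : ℕ) (m : ℤ), a m = a (m + 1) + 1 →
      a (m - 2 * (k : ℤ)) = a (m - 2 * (k : ℤ) + 1) + 1 := by
    intro k
    induction k with
    | zero => intro m hm; simpa using hm
    | succ k ih =>
      intro m hm
      have h1 := L (m - 2 * (k : ℤ)) (ih m hm)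
      rw [show (m - 2 * (((k : ℕ) + 1 : ℕ) : ℤ) + 1) = m - 2 * (k : ℤ) - 1 from by
            push_cast; ring,
          show (m - 2 * (((k : ℕ) + 1 : ℕ) : ℤ)) = m - 2 * (k : ℤ) - 2 from by
            push_cast; ring]
      exact h1
  have em : a (νm + 1) = a νm + 1 := by
    by_contra hc
    have hc' : a νm = a (νm + 1) + 1 := (step νm).resolve_left hc
    have hmem : νm + 1 ≤ νm := hνm.2 (by
      intro k hk
      by_cases h' : k ≤ νm
      · exact hm1 k h'
      · have hke : k = νm + 1 := by omega
        subst hke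
        rw [show νm + 1 - 1 = νm from by ring]
        exact hc')
    omega
  have ep : a (νp - 1) = a νp + 1 := by
    by_contra hc
    have hs := step (νp - 1)
    rw [show νp - 1 + 1 = νp from by ring] at hs
    have hc' : a νp = a (νp - 1) + 1 := hs.resolve_right hc
    have hmem : νp ≤ νp - 1 := hνp.2 (by
      intro k hk
      by_cases h' : νp ≤ k
      · exact hp1 k h'
      · have hke : k = νp - 1 := by omega
        subst hke
        rw [show νp - 1 + 1 = νp from by ring]
        exact hc')
    omega
  have hpm : (νp - νm) % 2 = 0 := by
    by_contra hc
    obtain ⟨k, hk⟩ : ∃ k : ℕ, νp - 1 = νm + 2 * (k : ℤ) :=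
      ⟨((νp - 1 - νm) / 2).toNat, by omega⟩
    have A := upk k νm em
    have B : a (νm + 2 * (k : ℤ)) = a (νm + 2 * (k : ℤ) + 1) + 1 := by
      rw [show νm + 2 * (k : ℤ) + 1 = νp from by omega,
          show νm + 2 * (k : ℤ) = νp - 1 from by omega]
      exact ep
    omega
  have plus : ∀ n : ℤ, νm ≤ n → (n - νm) % 2 = 0 → a (n + 1) = a n + 1 := by
    intro n h1 h2
    obtain ⟨k, hk⟩ : ∃ k : ℕ, n = νm + 2 * (k : ℤ) := ⟨((n - νm) / 2).toNat, by omega⟩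
    have A := upk k νm em
    rw [show νm + 2 * (k : ℤ) + 1 = n + 1 from by omega,
        show νm + 2 * (k : ℤ) = n from by omega] at A
    exact A
  have minus : ∀ n : ℤ, n ≤ νp - 1 → (νp - 1 - n) % 2 = 0 → a n = a (n + 1) + 1 := by
    intro n h1 h2
    obtain ⟨k, hk⟩ : ∃ k : ℕ, n = νp - 1 - 2 * (k : ℤ) :=
      ⟨((νp - 1 - n) / 2).toNat, by omega⟩
    have ep' : a (νp - 1) = a (νp - 1 + 1) + 1 := by
      rw [show νp - 1 + 1 = νp from by ring]; exact ep
    have A := downk k (νp - 1) ep'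
    rw [show νp - 1 - 2 * (k : ℤ) + 1 = n + 1 from by omega,
        show νp - 1 - 2 * (k : ℤ) = n from by omega] at A
    exact A
  have minus' : ∀ n : ℤ, n ≤ νm - 1 → a n = a (n + 1) + 1 := by
    intro n h
    have h' := hm1 (n + 1) (by omega)
    rwa [show n + 1 - 1 = n from by ring] at h'
  have G3 : ∀ n : ℤ, νm ≤ n → n ≤ νp - 2 → a (n + 2) = a n := by
    intro n h1 h2
    by_cases hp2 : (n - νm) % 2 = 0
    · have hA := plus n h1 hp2
      have hB := minus (n + 1) (by omega) (by omega)
      rw [show n + 1 + 1 = n + 2 from by ring] at hB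
      omega
    · have hA := minus n (by omega) (by omega)
      have hB := plus (n + 1) (by omega) (by omega)
      rw [show n + 1 + 1 = n + 2 from by ring] at hB
      omega
  have G5 : a νm = a νp := by
    have key : ∀ k : ℕ, νm + 2 * (k : ℤ) ≤ νp → a (νm + 2 * (k : ℤ)) = a νm := by
      intro k
      induction k with
      | zero => intro _; norm_num
      | succ k ih =>
        intro hk
        rw [show (νm + 2 * (((k : ℕ) + 1 : ℕ) : ℤ)) = νm + 2 * (k : ℤ) + 2 from by
              push_cast; ring]
        have hk2 : νm + 2 * (((k : ℕ) + 1 : ℕ) : ℤ) = νm + 2 * (k : ℤ) + 2 := by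
          push_cast; ring
        rw [hk2] at hk
        have h3 := G3 (νm + 2 * (k : ℤ)) (by omega) (by omega)
        rw [h3]
        exact ih (by omega)
    obtain ⟨k, hk⟩ : ∃ k : ℕ, νp = νm + 2 * (k : ℤ) := ⟨((νp - νm) / 2).toNat, by omega⟩
    have h := key k (by omega)
    rw [show νm + 2 * (k : ℤ) = νp from hk.symm] at h
    exact h.symm
  have G1 : ∀ n : ℤ, Even n → νm ≤ n → n ≤ νp →
      (Odd νp → a n = b n + 2) ∧ (Even νp → b n = a n + 2) := by
    intro n hev h1 h2
    have hn0 : n % 2 = 0 := Int.even_iff.mp hev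
    constructor
    · intro hop
      have hp0 : νp % 2 = 1 := Int.odd_iff.mp hop
      have hA := minus n (by omega) (by omega)
      have h8 := P8 n hev hA
      have hB := plus (n - 1) (by omega) (by omega)
      rw [show n - 1 + 1 = n from by ring] at hB
      omega
    · intro hep
      have hp0 : νp % 2 = 0 := Int.even_iff.mp hep
      by_cases hn : n = νp
      · subst hn
        have h4 := abs_le.mp (P4 (n - 1)).2
        rw [show n - 1 + 1 = n from by ring] at h4
        have hplus2 : a (n - 1) = a (n - 2) + 1 := by
          have h' := plus (n - 2) (by omega) (by omega)
          rwa [show n - 2 + 1 = n - 1 from by ring] at h'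
        have hne : ¬ (a (n - 1) = b n + 1) := by
          intro hcon
          have h5 := P5 (n - 1) (hep.sub_odd odd_one)
            (by rw [show n - 1 + 1 = n from by ring]; exact hcon)
          rw [show n - 1 - 1 = n - 2 from by ring] at h5
          omega
        have := pb n; have := pa (n - 1)
        omega
      · have hB := minus (n + 1) (by omega) (by omega)
        have h6 := P6 (n + 1) hev.add_one hB
        rw [show n + 1 - 1 = n from by ring] at h6
        have hC := plus n h1 (by omega)
        omega
  have G2 : ∀ n : ℤ, ¬ (Even n ∧ νm ≤ n ∧ n ≤ νp) → a n = b n := by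
    intro n hn
    rcases Int.even_or_odd n with hev | hod
    · have hn0 : n % 2 = 0 := Int.even_iff.mp hev
      have hcase : n ≤ νm - 1 ∨ νp + 1 ≤ n := by
        by_contra hc
        push_neg at hc
        exact hn ⟨hev, by omega, by omega⟩
      rcases hcase with h | h
      · have hA := minus' n (by omega)
        have h8 := P8 n hev hA
        have hB := hm1 n (by omega)
        omega
      · have hC := hp1 (n - 1) (by omega)
        rw [show n - 1 + 1 = n from by ring] at hC
        have hD := hp1 n (by omega)
        have h4 := abs_le.mp (P4 n).1
        have hne : ¬ (b n = a (n + 1) + 1) := by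
          intro hcon
          have h7 := P7 n hev hcon
          omega
        have := pa (n + 1); have := pb n
        omega
    · exact P1 n hod
  exact ⟨G1, G2, G3, em, G5, ep⟩
end

section
/- Let ν ∈ ℤ, C ∈ ℕ, and let s, a, g, h : ℤ → ℕ be sequences such that: (i) s(n) = C + |n − ν| for every n; (ii) a(n) ≥ s(n) for every n; (iii) a(n+1) ≤ a(n) + 1 for every n; (iv) h(n+1) ≤ a(n) + a(n+1) for every n; (v) h(n) ≥ 2·g(n) − 1 for every n ≥ 1; (vi) g(n) ≥ s(n) for every n ≥ 1. If there exists an integer n₀ with n₀ ≥ ν, n₀ ≥ 0, and a(n₀) = s(n₀), then a(n₀ + 1) = s(n₀ + 1) and g(n₀ + 1) = s(n₀ + 1). -/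
/-- Let `ν : ℤ`, `C : ℕ`, and `s a g h : ℤ → ℕ` with:
(i) `s n = C + |n - ν|`; (ii) `a n ≥ s n`; (iii) `a (n+1) ≤ a n + 1`;
(iv) `h (n+1) ≤ a n + a (n+1)`; (v) `h n ≥ 2 * g n - 1` for `n ≥ 1`;
(vi) `g n ≥ s n` for `n ≥ 1`.  If there is an integer `n₀` with `n₀ ≥ ν`, `n₀ ≥ 0`, and
`a n₀ = s n₀`, then `a (n₀ + 1) = s (n₀ + 1)` and `g (n₀ + 1) = s (n₀ + 1)`. -/
theorem stmt9 (ν : ℤ) (C : ℕ) (s a g h : ℤ → ℕ)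
    (hi : ∀ n : ℤ, s n = C + (n - ν).natAbs)
    (hii : ∀ n : ℤ, s n ≤ a n)
    (hiii : ∀ n : ℤ, a (n + 1) ≤ a n + 1)
    (hiv : ∀ n : ℤ, h (n + 1) ≤ a n + a (n + 1))
    (hv : ∀ n : ℤ, 1 ≤ n → 2 * g n ≤ h n + 1)
    (hvi : ∀ n : ℤ, 1 ≤ n → s n ≤ g n)
    (n₀ : ℤ) (hn₀ν : ν ≤ n₀) (hn₀0 : 0 ≤ n₀) (hn₀ : a n₀ = s n₀) :
    a (n₀ + 1) = s (n₀ + 1) ∧ g (n₀ + 1) = s (n₀ + 1) := by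
  have hs1 : s (n₀ + 1) = s n₀ + 1 := by rw [hi, hi]; omega
  have ha1 : a (n₀ + 1) = s (n₀ + 1) := by
    have := hiii n₀; have := hii (n₀ + 1); omega
  refine ⟨ha1, ?_⟩
  have h1 : (1 : ℤ) ≤ n₀ + 1 := by omega
  have := hv (n₀ + 1) h1
  have := hvi (n₀ + 1) h1
  have := hiv n₀
  omega
end

section
/- Let ν ∈ ℤ with ν ≥ 1, let C ∈ ℕ, and let s, a, h : ℤ → ℕ be sequences such that: (i) s(n) = C + |n − ν| for every n; (ii) a(n) ≥ s(n) for every n; (iii) a(n) ≤ a(n+1) + 1 for every n; (iv) h(n+1) ≤ a(n) + a(n+1) for every n; (v) h(1) ≥ 2·s(1) + 3. Then there is no integer n with 1 ≤ n ≤ ν and a(n) = s(n). -/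
/-- Let `ν : ℤ` with `ν ≥ 1`, `C : ℕ`, and `s a h : ℤ → ℕ` with:
(i) `s n = C + |n - ν|`; (ii) `a n ≥ s n`; (iii) `a n ≤ a (n+1) + 1`;
(iv) `h (n+1) ≤ a n + a (n+1)`; (v) `h 1 ≥ 2 * s 1 + 3`.  Then there is no integer `n`
with `1 ≤ n ≤ ν` and `a n = s n`. -/
theorem stmt10 (ν : ℤ) (hν : 1 ≤ ν) (C : ℕ) (s a h : ℤ → ℕ)
    (hi : ∀ n : ℤ, s n = C + (n - ν).natAbs)
    (hii : ∀ n : ℤ, s n ≤ a n)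
    (hiii : ∀ n : ℤ, a n ≤ a (n + 1) + 1)
    (hiv : ∀ n : ℤ, h (n + 1) ≤ a n + a (n + 1))
    (hv : 2 * s 1 + 3 ≤ h 1) :
    ¬ ∃ n : ℤ, 1 ≤ n ∧ n ≤ ν ∧ a n = s n := by
  rintro ⟨n, hn1, hnν, hans⟩
  -- iterate (iii): a m ≤ a (m + k) + k
  have key : ∀ k : ℕ, ∀ m : ℤ, a m ≤ a (m + k) + k := by
    intro k
    induction k with
    | zero => intro m; simp
    | succ k ih =>
      intro m
      calc a m ≤ a (m + 1) + 1 := hiii m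
        _ ≤ (a (m + 1 + k) + k) + 1 := by gcongr; exact ih (m + 1)
        _ = a (m + (k + 1 : ℕ)) + (k + 1) := by push_cast; ring_nf
  have hk := key (n - 1).toNat 1
  have h1n : (1 : ℤ) + (n - 1).toNat = n := by
    rw [Int.toNat_of_nonneg (by omega)]; ring
  rw [h1n] at hk
  -- compute s values
  have hs1 : s 1 = C + (ν - 1).natAbs := by rw [hi]; congr 1; omega
  have hsn : s n = C + (ν - n).natAbs := by rw [hi]; congr 1; omega
  have hs0 : s 0 = C + ν.natAbs := by rw [hi]; congr 1; omega
  have ha1 : a 1 = s 1 := by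
    have := hii 1
    have h2 : (n - 1).toNat = (ν - 1).natAbs - (ν - n).natAbs := by omega
    omega
  have ha0 : a 0 = s 0 := by
    have h01 := hiii 0
    have := hii 0
    have : ν.natAbs = (ν - 1).natAbs + 1 := by omega
    norm_num at h01
    omega
  have hfin := hiv 0
  norm_num at hfin
  have : ν.natAbs = (ν - 1).natAbs + 1 := by omega
  omega
end
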